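/- arXiv:1803.05895 — 5 statements merged into one kernel-verified Lean document; each statement's English description precedes it below -/
import Mathlib

section
/- Let K be a field of characteristic zero and let D_1, …, D_m : K → K be derivations of K that are linearly independent over K and satisfy [D_i, D_j] ∈ Span_K{D_1, …, D_m} for all i, j, where [D_i, D_j] = D_i∘D_j − D_j∘D_i. Then there exist pairwise commuting derivations δ_1, …, δ_m ∈ Span_K{D_1, …, D_m} that are linearly independent over K. -/
theorem deriv_sum_apply {K : Type*} [Field K] {n : ℕ} (f : Fin n → Derivation ℤ K K) (y : K) :
    (∑ i, f i) y = ∑ i, f i y := by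
  have := congrFun (map_sum Derivation.coeFnAddMonoidHom f Finset.univ) y
  simp only [Finset.sum_apply] at this
  exact this

theorem exists_det_ne_zero {K : Type*} [Field K] :
    ∀ {m : ℕ} (D : Fin m → Derivation ℤ K K), LinearIndependent K D →
      ∃ x : Fin m → K, (Matrix.of fun i j => (D i) (x j)).det ≠ 0 := by
  intro m
  induction m with
  | zero => intro D _; exact ⟨fun _ => 0, by simp⟩
  | succ n ih =>
    intro D hli
    obtain ⟨x', hx'⟩ := ih (fun i => D i.castSucc)
      (hli.comp Fin.castSucc (Fin.castSucc_injective n))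
    by_contra hcon
    push_neg at hcon
    set c : Fin (n+1) → K := fun i =>
      (-1) ^ (i + Fin.last n : ℕ) *
        (Matrix.det fun i' j' => (D (i.succAbove i')) (x' j')) with hc
    have key : ∀ y : K, ∑ i, c i * (D i) y = 0 := by
      intro y
      have h2 : ∀ i : Fin (n+1),
          ((Matrix.of fun i j => (D i) ((Fin.snoc x' y : Fin (n+1) → K) j)).submatrix
            i.succAbove (Fin.last n).succAbove).det =
          Matrix.det fun i' j' => (D (i.succAbove i')) (x' j') := by
        intro i
        congr 1
        ext i' j'
        simp [Fin.succAbove_last]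
      have h := hcon (Fin.snoc x' y)
      rw [Matrix.det_succ_column _ (Fin.last n)] at h
      rw [← h]
      apply Finset.sum_congr rfl
      intro i _
      rw [h2]
      simp only [hc, Matrix.of_apply, Fin.snoc_last]
      ring
    have hzero : ∑ i, c i • D i = 0 := by
      ext y
      rw [deriv_sum_apply]
      simpa only [Derivation.smul_apply, smul_eq_mul, Derivation.zero_apply] using key y
    have := Fintype.linearIndependent_iff.mp hli c hzero (Fin.last n)
    rw [hc] at this
    simp only [Fin.succAbove_last] at this
    have hlast : ((-1 : K)) ^ ((Fin.last n : ℕ) + (Fin.last n : ℕ)) *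
        (Matrix.det fun i' j' => (D (Fin.castSucc i')) (x' j')) = 0 := this
    rw [← two_mul, pow_mul, neg_one_sq, one_pow, one_mul] at hlast
    exact hx' hlast


theorem bracket_smul_left {K : Type*} [Field K] (a : K) (X Y : Derivation ℤ K K) :
    ⁅a • X, Y⁆ = a • ⁅X, Y⁆ - Y a • X := by
  ext t
  simp only [Derivation.commutator_apply, Derivation.smul_apply, Derivation.sub_apply,
    Derivation.leibniz, smul_eq_mul, map_smul]
  ring

theorem bracket_smul_right {K : Type*} [Field K] (a : K) (X Y : Derivation ℤ K K) :
    ⁅X, a • Y⁆ = a • ⁅X, Y⁆ + X a • Y := by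
  ext t
  simp only [Derivation.commutator_apply, Derivation.smul_apply, Derivation.add_apply,
    Derivation.leibniz, smul_eq_mul, map_smul]
  ring

theorem span_lie_closed {K : Type*} [Field K] {m : ℕ} (D : Fin m → Derivation ℤ K K)
    (hbr : ∀ i j, ⁅D i, D j⁆ ∈ Submodule.span K (Set.range D)) :
    ∀ X Y : Derivation ℤ K K, X ∈ Submodule.span K (Set.range D) →
      Y ∈ Submodule.span K (Set.range D) → ⁅X, Y⁆ ∈ Submodule.span K (Set.range D) := by
  intro X Y hX hY
  induction hX, hY using Submodule.span_induction₂ with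
  | mem_mem x y hx hy =>
    obtain ⟨i, rfl⟩ := hx
    obtain ⟨j, rfl⟩ := hy
    exact hbr i j
  | zero_left y hy => simp
  | zero_right x hx => simp
  | add_left x y z hx hy hz h1 h2 => rw [add_lie]; exact Submodule.add_mem _ h1 h2
  | add_right x y z hx hy hz h1 h2 => rw [lie_add]; exact Submodule.add_mem _ h1 h2
  | smul_left r x y hx hy h =>
    rw [bracket_smul_left]
    exact Submodule.sub_mem _ (Submodule.smul_mem _ _ h) (Submodule.smul_mem _ _ hx)
  | smul_right r x y hx hy h =>
    rw [bracket_smul_right]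
    exact Submodule.add_mem _ (Submodule.smul_mem _ _ h) (Submodule.smul_mem _ _ hy)

theorem exists_commuting_basis_of_lie_closed'
    {K : Type*} [Field K] {m : ℕ}
    (D : Fin m → Derivation ℤ K K)
    (hli : LinearIndependent K D)
    (hbr : ∀ i j, ⁅D i, D j⁆ ∈ Submodule.span K (Set.range D))
    (hdet' : ∃ x : Fin m → K, (Matrix.of fun i j => (D i) (x j)).det ≠ 0)
    (hclosed : ∀ X Y : Derivation ℤ K K, X ∈ Submodule.span K (Set.range D) →
      Y ∈ Submodule.span K (Set.range D) → ⁅X, Y⁆ ∈ Submodule.span K (Set.range D)) :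
    ∃ δ : Fin m → Derivation ℤ K K,
      (∀ i, δ i ∈ Submodule.span K (Set.range D)) ∧
      LinearIndependent K δ ∧
      ∀ i j, ⁅δ i, δ j⁆ = 0 := by
  obtain ⟨x, hdet⟩ := hdet'
  set M : Matrix (Fin m) (Fin m) K := Matrix.of fun i j => (D i) (x j) with hMdef
  have hM : IsUnit M.det := isUnit_iff_ne_zero.mpr hdet
  set δ : Fin m → Derivation ℤ K K := fun i => ∑ j, M⁻¹ i j • D j with hδdef
  have hmem : ∀ i, δ i ∈ Submodule.span K (Set.range D) := fun i =>
    Submodule.sum_mem _ fun j _ =>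
      Submodule.smul_mem _ _ (Submodule.subset_span ⟨j, rfl⟩)
  have hδx : ∀ i k, (δ i) (x k) = if i = k then 1 else 0 := by
    intro i k
    have : (δ i) (x k) = ∑ j, M⁻¹ i j * (D j) (x k) := by
      rw [hδdef]
      rw [deriv_sum_apply]
      simp [Derivation.smul_apply, smul_eq_mul]
    rw [this]
    have h1 : ∑ j, M⁻¹ i j * (D j) (x k) = (M⁻¹ * M) i k := by
      rw [Matrix.mul_apply]; rfl
    rw [h1, Matrix.nonsing_inv_mul M hM, Matrix.one_apply]
  -- any element of the span vanishing on all x k is zero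
  have hzero : ∀ E : Derivation ℤ K K, E ∈ Submodule.span K (Set.range D) →
      (∀ k, E (x k) = 0) → E = 0 := by
    intro E hE hEx
    obtain ⟨c, hc⟩ := (Submodule.mem_span_range_iff_exists_fun K).mp hE
    have hc0 : c = 0 := by
      have hvm : Matrix.vecMul c M = 0 := by
        funext k
        have h0 := hEx k
        rw [← hc, deriv_sum_apply] at h0
        simpa [Matrix.vecMul, dotProduct, Derivation.smul_apply, smul_eq_mul,
          hMdef] using h0
      have h1 := congrArg (fun v => Matrix.vecMul v M⁻¹) hvm
      simpa [Matrix.vecMul_vecMul, Matrix.mul_nonsing_inv M hM] using h1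
    rw [← hc]
    simp [hc0]
  refine ⟨δ, hmem, ?_, ?_⟩
  · rw [Fintype.linearIndependent_iff]
    intro c hc k
    have h := deriv_sum_apply (fun i => c i • δ i) (x k)
    rw [hc] at h
    simp only [Derivation.zero_apply, Derivation.smul_apply, smul_eq_mul, hδx, mul_ite,
      mul_one, mul_zero, Finset.sum_ite_eq', Finset.mem_univ, if_true] at h
    exact h.symm
  · intro i j
    apply hzero _ (hclosed _ _ (hmem i) (hmem j))
    intro k
    rw [Derivation.commutator_apply, hδx, hδx]
    by_cases h1 : j = k <;> by_cases h2 : i = k <;>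
      simp [h1, h2, Derivation.map_one_eq_zero]


/-- If `D₁, …, Dₘ` are derivations of a field `K` of characteristic
zero that are linearly independent over `K` and whose pairwise Lie brackets lie in
their `K`-linear span, then there are pairwise commuting derivations
`δ₁, …, δₘ` in the span of `D₁, …, Dₘ` that are linearly independent over `K`. -/
theorem exists_commuting_basis_of_lie_closed
    {K : Type*} [Field K] [CharZero K] {m : ℕ}
    (D : Fin m → Derivation ℤ K K)
    (hli : LinearIndependent K D)
    (hbr : ∀ i j, ⁅D i, D j⁆ ∈ Submodule.span K (Set.range D)) :
    ∃ δ : Fin m → Derivation ℤ K K,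
      (∀ i, δ i ∈ Submodule.span K (Set.range D)) ∧
      LinearIndependent K δ ∧
      ∀ i j, ⁅δ i, δ j⁆ = 0 :=
  exists_commuting_basis_of_lie_closed' D hli hbr (exists_det_ne_zero D hli)
    (span_lie_closed D hbr)
end

section
/- Let K be a field of characteristic zero and let j, j', j'', j''' ∈ K with j ≠ 0, j ≠ 1728, j' ≠ 0, j'' ≠ 0, j''' ≠ 0 and f(j, j', j'', j''') = 0. Let D_1 and D_2 be derivations of K such that for i = 1, 2: j''·D_i(j) = j'·D_i(j') and j'''·D_i(j') = j''·D_i(j'') (equivalently, D_i j / j' = D_i j' / j'' = D_i j'' / j'''). Then the commutator D := D_1∘D_2 − D_2∘D_1 (which is again a derivation of K) satisfies the same relations: j''·D(j) = j'·D(j') and j'''·D(j') = j''·D(j''). -/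
/-- The rational function `f` from the differential equation of the modular
`j`-function:
`f(y₀,y₁,y₂,y₃) = y₃/y₁ - (3/2)(y₂/y₁)² + ((y₀² - 1968 y₀ + 2654208)/(2 y₀² (y₀ - 1728)²)) y₁²`. -/
noncomputable def modularF {K : Type*} [Field K] (y₀ y₁ y₂ y₃ : K) : K :=
  y₃ / y₁ - (3 / 2) * (y₂ / y₁) ^ 2 +
    ((y₀ ^ 2 - 1968 * y₀ + 2654208) / (2 * y₀ ^ 2 * (y₀ - 1728) ^ 2)) * y₁ ^ 2

/-- Differentiating the polynomial form of the modular differential equation: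
if `D j = c j'`, `D j' = c j''`, `D j'' = c j'''` and the polynomial relation holds,
then `A · D j''' = c · Q` for the explicit quantities `A`, `Q`. -/
lemma modular_deriv_aux {K : Type*} [Field K] [CharZero K]
    (j j' j'' j''' c : K) (D : Derivation ℤ K K)
    (hD : D j = c * j') (hD' : D j' = c * j'') (hD'' : D j'' = c * j''')
    (hP : 2*j'*j^2*(j-1728)^2*j''' = 3*j^2*(j-1728)^2*j''^2 - (j^2-1968*j+2654208)*j'^4) :
    2*j'*j^2*(j-1728)^2 * D j''' = c *
      (6*j*j'*(j-1728)^2*j''^2 + 6*j^2*(j-1728)*j'*j''^2 + 6*j^2*(j-1728)^2*j''*j'''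
        - (2*j-1968)*j'^5 - 4*(j^2-1968*j+2654208)*j'^3*j''
        - 2*j''*j^2*(j-1728)^2*j''' - 4*j*j'^2*(j-1728)^2*j''' - 4*j'^2*j^2*(j-1728)*j''') := by
  have h2 : D (2:K) = 0 := by rw [show (2:K) = ((2:ℕ):K) by norm_num]; exact D.map_natCast 2
  have h3 : D (3:K) = 0 := by rw [show (3:K) = ((3:ℕ):K) by norm_num]; exact D.map_natCast 3
  have ha : D (1728:K) = 0 := by
    rw [show (1728:K) = ((1728:ℕ):K) by norm_num]; exact D.map_natCast 1728
  have hb : D (1968:K) = 0 := by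
    rw [show (1968:K) = ((1968:ℕ):K) by norm_num]; exact D.map_natCast 1968
  have hc : D (2654208:K) = 0 := by
    rw [show (2654208:K) = ((2654208:ℕ):K) by norm_num]; exact D.map_natCast 2654208
  have key := congrArg D hP
  simp only [Derivation.leibniz, Derivation.leibniz_pow, map_sub, map_add, smul_eq_mul,
    nsmul_eq_mul, hD, hD', hD'', h2, h3, ha, hb, hc, Nat.cast_ofNat] at key
  norm_num at key
  linear_combination key

/-- Let `K` be a field of characteristic zero and
`j, j', j'', j''' ∈ K` be nonzero with `j ≠ 1728` and `f(j, j', j'', j''') = 0`.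
If `D₁, D₂` are derivations of `K` with `j''·Dᵢ j = j'·Dᵢ j'` and
`j'''·Dᵢ j' = j''·Dᵢ j''` for `i = 1, 2`, then the commutator `⁅D₁, D₂⁆`
satisfies the same relations. -/
theorem commutator_preserves_j_relations
    {K : Type*} [Field K] [CharZero K]
    (j j' j'' j''' : K)
    (hj0 : j ≠ 0) (hj1728 : j ≠ 1728) (hj'0 : j' ≠ 0) (hj''0 : j'' ≠ 0)
    (hj'''0 : j''' ≠ 0)
    (hf : modularF j j' j'' j''' = 0)
    (D₁ D₂ : Derivation ℤ K K)
    (h₁ : j'' * D₁ j = j' * D₁ j') (h₁' : j''' * D₁ j' = j'' * D₁ j'')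
    (h₂ : j'' * D₂ j = j' * D₂ j') (h₂' : j''' * D₂ j' = j'' * D₂ j'') :
    j'' * ⁅D₁, D₂⁆ j = j' * ⁅D₁, D₂⁆ j' ∧
      j''' * ⁅D₁, D₂⁆ j' = j'' * ⁅D₁, D₂⁆ j'' := by
  have h1728 : j - 1728 ≠ 0 := sub_ne_zero.2 hj1728
  -- polynomial form of the differential equation
  have hP : 2*j'*j^2*(j-1728)^2*j''' = 3*j^2*(j-1728)^2*j''^2 - (j^2-1968*j+2654208)*j'^4 := by
    rw [modularF] at hf
    field_simp at hf
    refine mul_left_cancel₀ (mul_ne_zero (two_ne_zero) hj'0 : (2:K)*j' ≠ 0) ?_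
    linear_combination (2*j') * hf
  -- the proportionality constants
  obtain ⟨c₁, hD₁⟩ : ∃ c, D₁ j = c * j' := ⟨D₁ j / j', (div_mul_cancel₀ _ hj'0).symm⟩
  obtain ⟨c₂, hD₂⟩ : ∃ c, D₂ j = c * j' := ⟨D₂ j / j', (div_mul_cancel₀ _ hj'0).symm⟩
  have hD₁' : D₁ j' = c₁ * j'' := by
    refine mul_left_cancel₀ hj'0 ?_; rw [← h₁, hD₁]; ring
  have hD₂' : D₂ j' = c₂ * j'' := by
    refine mul_left_cancel₀ hj'0 ?_; rw [← h₂, hD₂]; ring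
  have hD₁'' : D₁ j'' = c₁ * j''' := by
    have := h₁'; rw [hD₁'] at this
    exact mul_left_cancel₀ hj''0 (by linear_combination -this)
  have hD₂'' : D₂ j'' = c₂ * j''' := by
    have := h₂'; rw [hD₂'] at this
    exact mul_left_cancel₀ hj''0 (by linear_combination -this)
  -- the key cancellation for the third derivative
  have e₁ := modular_deriv_aux j j' j'' j''' c₁ D₁ hD₁ hD₁' hD₁'' hP
  have e₂ := modular_deriv_aux j j' j'' j''' c₂ D₂ hD₂ hD₂' hD₂'' hP
  have hA : (2*j'*j^2*(j-1728)^2 : K) ≠ 0 := mul_ne_zero (mul_ne_zero (mul_ne_zero two_ne_zero hj'0) (pow_ne_zero 2 hj0)) (pow_ne_zero 2 h1728)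
  have hcomm : c₂ * D₁ j''' = c₁ * D₂ j''' := by
    refine mul_left_cancel₀ hA ?_
    calc 2*j'*j^2*(j-1728)^2 * (c₂ * D₁ j''')
        = c₂ * (2*j'*j^2*(j-1728)^2 * D₁ j''') := by ring
      _ = c₁ * (2*j'*j^2*(j-1728)^2 * D₂ j''') := by rw [e₁, e₂]; ring
      _ = 2*j'*j^2*(j-1728)^2 * (c₁ * D₂ j''') := by ring
  -- compute the commutator on j, j', j''
  set e : K := D₁ c₂ - D₂ c₁ with he
  have hj : ⁅D₁, D₂⁆ j = e * j' := by
    rw [Derivation.commutator_apply, hD₂, hD₁, Derivation.leibniz, Derivation.leibniz,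
      hD₁', hD₂', smul_eq_mul, smul_eq_mul, smul_eq_mul, smul_eq_mul, he]; ring
  have hj' : ⁅D₁, D₂⁆ j' = e * j'' := by
    rw [Derivation.commutator_apply, hD₂', hD₁', Derivation.leibniz, Derivation.leibniz,
      hD₁'', hD₂'', smul_eq_mul, smul_eq_mul, smul_eq_mul, smul_eq_mul, he]; ring
  have hj'' : ⁅D₁, D₂⁆ j'' = e * j''' := by
    rw [Derivation.commutator_apply, hD₂'', hD₁'', Derivation.leibniz, Derivation.leibniz,
      smul_eq_mul, smul_eq_mul, smul_eq_mul, smul_eq_mul, he]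
    linear_combination hcomm
  exact ⟨by rw [hj, hj']; ring, by rw [hj', hj'']; ring⟩
end

section
/- Let (K, D) be a differential field of characteristic zero with field of constants C = ker(D). Let z, j, j', j'', j''' ∈ K satisfy D(z) ≠ 0, j ≠ 0, j ≠ 1728, j' ≠ 0, D(j) = j'·D(z), D(j') = j''·D(z), D(j'') = j'''·D(z), and f(j, j', j'', j''') = 0. Let a, b, c, d ∈ C with ad − bc = 1 and cz + d ≠ 0, and set w := (az + b)/(cz + d). Then there exist J_1, J_2, J_3 ∈ K with J_1 = j'·(cz + d)² such that D(j) = J_1·D(w), D(J_1) = J_2·D(w), D(J_2) = J_3·D(w), and f(j, J_1, J_2, J_3) = 0. -/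
set_option maxHeartbeats 1000000 in
/-- **SL₂(C)-invariance of the differential equation of `j`.**
Let `(K, D)` be a differential field of characteristic zero, and let
`z, j, j', j'', j''' ∈ K` satisfy `D z ≠ 0`, `j ≠ 0`, `j ≠ 1728`, `j' ≠ 0`,
`D j = j'·D z`, `D j' = j''·D z`, `D j'' = j'''·D z` and `f(j, j', j'', j''') = 0`.
If `a, b, c, d` are constants with `ad - bc = 1` and `cz + d ≠ 0`, and
`w = (az + b)/(cz + d)`, then there are `J₁, J₂, J₃ ∈ K` with
`J₁ = j'·(cz + d)²`, `D j = J₁·D w`, `D J₁ = J₂·D w`, `D J₂ = J₃·D w` and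
`f(j, J₁, J₂, J₃) = 0`. -/
theorem sl2_invariance_of_j_equation
    {K : Type*} [Field K] [CharZero K]
    (D : Derivation ℤ K K)
    (z j j' j'' j''' : K)
    (hz : D z ≠ 0) (hj0 : j ≠ 0) (hj1728 : j ≠ 1728) (hj'0 : j' ≠ 0)
    (h1 : D j = j' * D z) (h2 : D j' = j'' * D z) (h3 : D j'' = j''' * D z)
    (hf : modularF j j' j'' j''' = 0)
    (a b c d : K)
    (ha : D a = 0) (hb : D b = 0) (hc : D c = 0) (hd : D d = 0)
    (hdet : a * d - b * c = 1) (hden : c * z + d ≠ 0) :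
    ∃ J₁ J₂ J₃ : K,
      J₁ = j' * (c * z + d) ^ 2 ∧
      D j = J₁ * D ((a * z + b) / (c * z + d)) ∧
      D J₁ = J₂ * D ((a * z + b) / (c * z + d)) ∧
      D J₂ = J₃ * D ((a * z + b) / (c * z + d)) ∧
      modularF j J₁ J₂ J₃ = 0 := by
  set q : K := c * z + d with hq
  clear_value q
  have hD2 : D (2 : K) = 0 := by simpa using D.map_natCast 2
  have hDnum : D (a * z + b) = a * D z := by
    simp [Derivation.leibniz, ha, hb, smul_eq_mul]
  have hDden : D q = c * D z := by
    simp [hq, Derivation.leibniz, hc, hd, smul_eq_mul]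
  have hDw : D ((a * z + b) / q) = D z / q ^ 2 := by
    rw [Derivation.leibniz_div, hDnum, hDden, smul_eq_mul, smul_eq_mul, smul_eq_mul]
    field_simp
    ring_nf
    linear_combination hdet + a * hq
  refine ⟨j' * q ^ 2, j'' * q ^ 4 + 2 * c * j' * q ^ 3,
    j''' * q ^ 6 + 6 * c * j'' * q ^ 5 + 6 * c ^ 2 * j' * q ^ 4, rfl, ?_, ?_, ?_, ?_⟩
  · rw [hDw, h1]; field_simp
  · rw [hDw]
    have : D (j' * q ^ 2) = j'' * D z * q ^ 2 + j' * (2 * q * (c * D z)) := by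
      simp [Derivation.leibniz, Derivation.leibniz_pow, hDden, h2, smul_eq_mul]; ring
    rw [this]; field_simp
  · rw [hDw]
    have : D (j'' * q ^ 4 + 2 * c * j' * q ^ 3)
        = j''' * D z * q ^ 4 + j'' * (4 * q ^ 3 * (c * D z))
          + 2 * c * (j'' * D z * q ^ 3 + j' * (3 * q ^ 2 * (c * D z))) := by
      simp [Derivation.leibniz, Derivation.leibniz_pow, hDden, h2, h3, hc, hD2, smul_eq_mul]
      ring
    rw [this]; field_simp; ring
  · have hq0 : q ≠ 0 := hden
    have hJ1 : j' * q ^ 2 ≠ 0 := mul_ne_zero hj'0 (pow_ne_zero 2 hq0)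
    have h1728 : j - 1728 ≠ 0 := sub_ne_zero.mpr hj1728
    have h2K : (2 : K) ≠ 0 := two_ne_zero
    unfold modularF at hf ⊢
    field_simp at hf ⊢
    linear_combination (q ^ 4) * hf
end

section
/- Let C be a field of characteristic zero, let p_1, …, p_k ∈ C[X_1, …, X_n] generate a radical ideal I, and let P be a minimal prime ideal over I. Let L be a field extension of C and let w ∈ L^n be a generic point of P over C, i.e. { p ∈ C[X_1, …, X_n] : p(w) = 0 } = P. Then for every polynomial q ∈ P, the rank over L of the k × n Jacobian matrix (∂p_l/∂X_i (w))_{l,i} equals the rank of the (k+1) × n matrix obtained by appending the row (∂q/∂X_i (w))_i. -/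
open MvPolynomial

/-- Let `p₁, …, p_k ∈ C[X₁, …, Xₙ]` generate a radical ideal `I`,
let `P` be a minimal prime over `I`, and let `w ∈ Lⁿ` be a generic point of `P`
over `C` (for a field extension `L` of `C`).  Then for every `q ∈ P`, appending the
row of partial derivatives of `q` at `w` to the Jacobian matrix of `p₁, …, p_k`
at `w` does not change its rank over `L`. -/
theorem jacobian_rank_append_of_mem_prime
    {C : Type*} [Field C] [CharZero C] {n k : ℕ}
    (p : Fin k → MvPolynomial (Fin n) C)
    (hrad : (Ideal.span (Set.range p)).IsRadical)
    (P : Ideal (MvPolynomial (Fin n) C))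
    (hP : P ∈ (Ideal.span (Set.range p)).minimalPrimes)
    {L : Type*} [Field L] [Algebra C L]
    (w : Fin n → L)
    (hw : ∀ r : MvPolynomial (Fin n) C, aeval w r = 0 ↔ r ∈ P)
    (q : MvPolynomial (Fin n) C) (hq : q ∈ P) :
    (Matrix.of fun (l : Fin k) (i : Fin n) => aeval w (pderiv i (p l))).rank =
      (Matrix.of (Matrix.vecCons (fun i : Fin n => aeval w (pderiv i q))
        (fun (l : Fin k) (i : Fin n) => aeval w (pderiv i (p l))))).rank := by
  classical
  set I : Ideal (MvPolynomial (Fin n) C) := Ideal.span (Set.range p) with hI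
  have hPprime : P.IsPrime := hP.1.1
  have hIP : I ≤ P := hP.1.2
  -- the set of minimal primes over I is finite
  have hfin : I.minimalPrimes.Finite := by
    rw [Ideal.minimalPrimes_eq_comap]
    exact ((minimalPrimes.finite_of_isNoetherianRing _).image _)
  -- find g in all other minimal primes but not in P
  obtain ⟨g, hg1, hg2⟩ : ∃ g, (∀ P' ∈ I.minimalPrimes, P' ≠ P → g ∈ P') ∧ g ∉ P := by
    by_contra h
    push_neg at h
    set s : Finset (Ideal (MvPolynomial (Fin n) C)) :=
      (hfin.subset (Set.diff_subset (t := {P}))).toFinset with hs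
    have hmem_s : ∀ {P'}, P' ∈ s ↔ P' ∈ I.minimalPrimes ∧ P' ≠ P := by
      intro P'
      rw [hs, Set.Finite.mem_toFinset]
      simp [Set.mem_diff]
    have hinf : s.inf id ≤ P := fun x hx =>
      h x fun P' h1 h2 => (Finset.inf_le (hmem_s.mpr ⟨h1, h2⟩) : s.inf id ≤ P') hx
    obtain ⟨P', hP's, hP'le⟩ := (Ideal.IsPrime.inf_le' hPprime).mp hinf
    rw [hmem_s] at hP's
    exact hP's.2 (le_antisymm hP'le (hP.2 ⟨hP's.1.1.1, hP's.1.1.2⟩ hP'le))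
  -- g * q ∈ I
  have hgq : g * q ∈ I := by
    rw [← hrad.radical, ← Ideal.sInf_minimalPrimes]
    refine Ideal.mem_sInf.mpr fun {P'} hP' => ?_
    by_cases hPP : P' = P
    · subst hPP; exact Ideal.mul_mem_left _ g hq
    · exact Ideal.mul_mem_right q _ (hg1 P' hP' hPP)
  obtain ⟨a, ha⟩ := (Ideal.mem_span_range_iff_exists_fun).mp hgq
  -- evaluation facts
  have hpw : ∀ l, aeval w (p l) = 0 := fun l =>
    (hw (p l)).mpr (hIP (Ideal.subset_span (Set.mem_range_self l)))
  have hqw : aeval w q = 0 := (hw q).mpr hq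
  have hgw : aeval w g ≠ 0 := fun h0 => hg2 ((hw g).mp h0)
  -- key identity
  have key : ∀ i, aeval w g * aeval w (pderiv i q) =
      ∑ l, aeval w (a l) * aeval w (pderiv i (p l)) := by
    intro i
    have := congrArg (fun r => aeval w (pderiv i r)) ha
    simp only [map_sum, pderiv_mul, map_add, map_mul, hqw, hpw, mul_zero, zero_mul,
      add_zero, zero_add, Finset.sum_congr] at this
    simpa using this.symm
  -- the appended row lies in the span of the rows
  set M : Matrix (Fin k) (Fin n) L :=
    Matrix.of fun (l : Fin k) (i : Fin n) => aeval w (pderiv i (p l)) with hM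
  set r : Fin n → L := fun i : Fin n => aeval w (pderiv i q) with hr
  have hmemspan : r ∈ Submodule.span L (Set.range M) := by
    refine (Submodule.mem_span_range_iff_exists_fun L).mpr ?_
    refine ⟨fun l => (aeval w g)⁻¹ * aeval w (a l), funext fun i => ?_⟩
    simp only [Pi.smul_apply, Finset.sum_apply, smul_eq_mul]
    have : r i = (aeval w g)⁻¹ * (aeval w g * aeval w (pderiv i q)) := by
      rw [← mul_assoc, inv_mul_cancel₀ hgw, one_mul]
    rw [key i] at this
    rw [this, Finset.mul_sum]
    exact Finset.sum_congr rfl fun l _ => by rw [mul_assoc]; rfl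
  have hspan : Submodule.span L (Set.range (Matrix.of (Matrix.vecCons r M))) =
      Submodule.span L (Set.range M) := by
    rw [show Set.range (Matrix.of (Matrix.vecCons r M)) = {r} ∪ Set.range M from
      Matrix.range_cons r M, Set.singleton_union, Submodule.span_insert_eq_span hmemspan]
  show M.rank = (Matrix.of (Matrix.vecCons r M)).rank
  rw [Matrix.rank_eq_finrank_span_row, Matrix.rank_eq_finrank_span_row]
  exact congrArg (fun S : Submodule L (Fin n → L) => Module.finrank L S) hspan.symm
end

section
/- Let C be a field of characteristic zero and let P, Q ⊆ C[X_1, …, X_n] be prime ideals. Let R be a minimal prime ideal over P + Q. Let v ∈ L_1^n, u ∈ L_2^n, w ∈ L_3^n (for field extensions L_1, L_2, L_3 of C) be generic points over C of P, Q, R respectively. Let f_1, …, f_n ∈ C(X_1, …, X_n) be rational functions, each with a representation a_i/b_i with a_i, b_i ∈ C[X_1, …, X_n] and b_i ∉ P, b_i ∉ Q, b_i ∉ R (so each f_i is defined at v, u and w). Suppose there is a derivation D_1 of the subfield C(v) ⊆ L_1 over C with D_1(v_i) = f_i(v) for i = 1, …, n, and a derivation D_2 of the subfield C(u) ⊆ L_2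 over C with D_2(u_i) = f_i(u) for i = 1, …, n. Then there is a derivation D of the subfield C(w) ⊆ L_3 over C with D(w_i) = f_i(w) for i = 1, …, n. -/
open MvPolynomial

set_option synthInstance.maxHeartbeats 1000000
set_option maxHeartbeats 1000000

noncomputable section Aux

open Finset

variable {F : Type*} [Field F] {n : ℕ}

/-- The polynomial derivation `∑ i, (aᵢ ∏_{j≠i} bⱼ) ∂ᵢ`. -/
def sdelta (a b : Fin n → MvPolynomial (Fin n) F) :
    Derivation F (MvPolynomial (Fin n) F) (MvPolynomial (Fin n) F) :=
  MvPolynomial.mkDerivation F fun i => a i * ∏ j ∈ univ.erase i, b j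

lemma sdelta_X (a b : Fin n → MvPolynomial (Fin n) F) (i : Fin n) :
    sdelta a b (X i) = a i * ∏ j ∈ univ.erase i, b j :=
  MvPolynomial.mkDerivation_X _ _ _

lemma sdelta_apply (a b : Fin n → MvPolynomial (Fin n) F) (p : MvPolynomial (Fin n) F) :
    sdelta a b p = ∑ i, (a i * ∏ j ∈ univ.erase i, b j) * pderiv i p := by
  induction p using MvPolynomial.induction_on with
  | C c => simp
  | add p q hp hq => simp [hp, hq, mul_add, Finset.sum_add_distrib]
  | mul_X p i hp =>
      have h1 : ∀ j : Fin n, (a j * ∏ k ∈ univ.erase j, b k) * pderiv j (p * X i)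
          = ((a j * ∏ k ∈ univ.erase j, b k) * pderiv j p) * X i
            + p * ((a j * ∏ k ∈ univ.erase j, b k) * Pi.single (M := fun _ => MvPolynomial (Fin n) F) j 1 i) := by
        intro j
        rw [pderiv_mul]
        classical
        rw [pderiv_X]
        ring
      have h2 : ∑ j : Fin n, p * ((a j * ∏ k ∈ univ.erase j, b k) * Pi.single (M := fun _ => MvPolynomial (Fin n) F) j 1 i)
          = p * (a i * ∏ k ∈ univ.erase i, b k) := by
        rw [← Finset.mul_sum]
        congr 1
        rw [Finset.sum_eq_single i]
        · simp
        · intro j _ hj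
          rw [Pi.single_eq_of_ne (Ne.symm hj), mul_zero]
        · intro h; exact absurd (Finset.mem_univ i) h
      calc sdelta a b (p * X i)
          = p * (a i * ∏ k ∈ univ.erase i, b k) + X i * sdelta a b p := by
            rw [Derivation.leibniz, smul_eq_mul, smul_eq_mul, sdelta_X]
        _ = ∑ j, (a j * ∏ k ∈ univ.erase j, b k) * pderiv j (p * X i) := by
            simp only [h1]
            rw [Finset.sum_add_distrib, ← Finset.sum_mul, h2, ← hp]
            ring

noncomputable section Aux2

variable {F : Type*} [Field F] {n : ℕ}

lemma derivation_aeval_eq {L : Type*} [CommRing L] [Algebra F L]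
    (D : Derivation F L L) (x : Fin n → L) (p : MvPolynomial (Fin n) F) :
    D (aeval x p) = ∑ i, aeval x (pderiv i p) * D (x i) := by
  induction p using MvPolynomial.induction_on with
  | C c => simp
  | add p q hp hq => simp [map_add, hp, hq, add_mul, Finset.sum_add_distrib]
  | mul_X p i hp =>
      have h1 : ∀ j : Fin n, aeval x (pderiv j (p * X i)) * D (x j)
          = (aeval x (pderiv j p) * D (x j)) * x i
            + (aeval x p * aeval x (Pi.single (M := fun _ => MvPolynomial (Fin n) F) j 1 i))
              * D (x j) := by
        intro j
        classical
        rw [pderiv_mul, pderiv_X, map_add, map_mul, map_mul, aeval_X]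
        ring
      have h2 : ∑ j : Fin n, (aeval x p *
            aeval x (Pi.single (M := fun _ => MvPolynomial (Fin n) F) j 1 i)) * D (x j)
          = aeval x p * D (x i) := by
        rw [Finset.sum_eq_single i]
        · simp
        · intro j _ hj
          rw [Pi.single_eq_of_ne (Ne.symm hj), map_zero, mul_zero, zero_mul]
        · intro h; exact absurd (Finset.mem_univ i) h
      calc D (aeval x (p * X i))
          = aeval x p * D (x i) + x i * D (aeval x p) := by
            rw [map_mul, aeval_X, Derivation.leibniz, smul_eq_mul, smul_eq_mul]
        _ = ∑ j, aeval x (pderiv j (p * X i)) * D (x j) := by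
            simp only [h1]
            rw [Finset.sum_add_distrib, ← Finset.sum_mul, h2, ← hp]
            ring

lemma exists_mul_pow_mem {R0 : Type*} [CommRing R0] {I R : Ideal R0} (hRp : R.IsPrime)
    (hmin : R ∈ I.minimalPrimes) {x : R0} (hx : x ∈ R) :
    ∃ s, s ∉ R ∧ ∃ m : ℕ, s * x ^ m ∈ I := by
  by_contra hcon
  push_neg at hcon
  have hone : (1 : R0) ∉ R := fun h => hRp.ne_top ((Ideal.eq_top_iff_one R).2 h)
  set T : Submonoid R0 :=
    { carrier := {y | ∃ s, s ∉ R ∧ ∃ m : ℕ, y = s * x ^ m}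
      one_mem' := ⟨1, hone, 0, by simp⟩
      mul_mem' := by
        rintro y z ⟨s₁, hs₁, m₁, rfl⟩ ⟨s₂, hs₂, m₂, rfl⟩
        exact ⟨s₁ * s₂, fun h => ((hRp.mem_or_mem h).elim hs₁ hs₂), m₁ + m₂, by ring⟩ } with hT
  have hdisj : Disjoint (I : Set R0) (T : Set R0) := by
    rw [Set.disjoint_left]
    rintro y hy ⟨s, hs, m, rfl⟩
    exact hcon s hs m hy
  obtain ⟨J, hJp, hIJ, hJT⟩ := Ideal.exists_le_prime_disjoint I T hdisj
  have hJR : J ≤ R := by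
    intro y hy
    by_contra hyR
    exact Set.disjoint_left.mp hJT hy ⟨y, hyR, 0, by simp⟩
  have hRJ : R ≤ J := hmin.2 ⟨hJp, hIJ⟩ hJR
  exact Set.disjoint_left.mp hJT (hRJ hx) ⟨1, hone, 1, by simp⟩

noncomputable section Aux3

variable {F : Type*} [Field F] {n : ℕ}

lemma descend_aux [CharZero F] {I R : Ideal (MvPolynomial (Fin n) F)} (hRp : R.IsPrime)
    (hIR : I ≤ R) (δ : Derivation F (MvPolynomial (Fin n) F) (MvPolynomial (Fin n) F))
    (hδI : ∀ y ∈ I, δ y ∈ I) (x : MvPolynomial (Fin n) F) :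
    ∀ (k : ℕ) (s : MvPolynomial (Fin n) F), s ∉ R → ∀ r : ℕ,
      s * x ^ k * δ x ^ r ∈ I → δ x ∈ R := by
  intro k
  induction k with
  | zero =>
      intro s hs r h
      have h' : s * δ x ^ r ∈ R := hIR (by simpa using h)
      rcases hRp.mem_or_mem h' with h1 | h1
      · exact absurd h1 hs
      · rcases r with _ | r
        · exact absurd ((Ideal.eq_top_iff_one R).2 (by simpa using h1)) hRp.ne_top
        · exact hRp.mem_of_pow_mem _ h1
  | succ k ih =>
      intro s hs r h
      set d := δ x with hd
      have hdr : d * δ (d ^ r) = (r : MvPolynomial (Fin n) F) * (d ^ r * δ d) := by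
        rcases r with _ | r
        · simp
        · rw [Derivation.leibniz_pow]
          simp only [Nat.add_sub_cancel, nsmul_eq_mul, smul_eq_mul]
          push_cast
          ring
      have e2 : δ (x ^ (k+1)) = ((k+1 : ℕ) : MvPolynomial (Fin n) F) * x ^ k * δ x := by
        rw [Derivation.leibniz_pow]
        simp only [Nat.add_sub_cancel, nsmul_eq_mul, smul_eq_mul]
        ring
      have h1 : δ (s * x ^ (k+1) * d ^ r)
          = δ s * (x ^ (k+1) * d ^ r)
            + s * (((k+1 : ℕ) : MvPolynomial (Fin n) F) * x ^ k * δ x * d ^ r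
                    + x ^ (k+1) * δ (d ^ r)) := by
        rw [Derivation.leibniz, Derivation.leibniz, e2]
        simp only [smul_eq_mul]
        ring
      have hy : s * x ^ (k+1) * d ^ r ∈ I := h
      have hδy : δ (s * x ^ (k+1) * d ^ r) ∈ I := hδI _ h
      have key : ((k+1 : ℕ) : MvPolynomial (Fin n) F) * (s^2 * x ^ k * d ^ (r+2))
          = s * d * δ (s * x ^ (k+1) * d ^ r) - δ s * d * (s * x ^ (k+1) * d ^ r)
            - (r : MvPolynomial (Fin n) F) * (s * δ d * (s * x ^ (k+1) * d ^ r)) := by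
        rw [h1]
        linear_combination (-(s^2 * x^(k+1))) * hdr
      have hmem : ((k+1 : ℕ) : MvPolynomial (Fin n) F) * (s^2 * x ^ k * d ^ (r+2)) ∈ I := by
        rw [key]
        refine I.sub_mem (I.sub_mem (I.mul_mem_left _ hδy) (I.mul_mem_left _ hy)) ?_
        rw [show (r : MvPolynomial (Fin n) F) * (s * δ d * (s * x ^ (k+1) * d ^ r))
            = ((r : MvPolynomial (Fin n) F) * (s * δ d)) * (s * x ^ (k+1) * d ^ r) from by ring]
        exact I.mul_mem_left _ hy
      have hc : ((k+1 : ℕ) : F) ≠ 0 := Nat.cast_ne_zero.2 (Nat.succ_ne_zero k)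
      have hunit : s^2 * x ^ k * d ^ (r+2) ∈ I := by
        have h2 := I.mul_mem_left (MvPolynomial.C (((k+1 : ℕ) : F)⁻¹)) hmem
        rwa [show ((k+1 : ℕ) : MvPolynomial (Fin n) F)
              = MvPolynomial.C ((k+1 : ℕ) : F) from (map_natCast (MvPolynomial.C) _).symm,
          ← mul_assoc, ← MvPolynomial.C_mul, inv_mul_cancel₀ hc, MvPolynomial.C_1, one_mul] at h2
      exact ih (s^2) (fun hm2 => hs ((hRp.mem_or_mem (by rwa [sq] at hm2)).elim id id)) (r+2) hunit


section Nec

variable {F : Type*} [Field F] {n : ℕ}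

lemma delta_mem_of_derivation {L : Type*} [Field L] [Algebra F L]
    (R : Ideal (MvPolynomial (Fin n) F)) (w : Fin n → L)
    (hw : ∀ r : MvPolynomial (Fin n) F, aeval w r = 0 ↔ r ∈ R)
    (a b : Fin n → MvPolynomial (Fin n) F)
    (hb : ∀ i, aeval w (b i) ≠ 0)
    (D : Derivation F (IntermediateField.adjoin F (Set.range w))
      (IntermediateField.adjoin F (Set.range w)))
    (hD : ∀ i, (D ⟨w i, IntermediateField.subset_adjoin F (Set.range w) ⟨i, rfl⟩⟩ : L)
        = aeval w (a i) / aeval w (b i))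
    {p : MvPolynomial (Fin n) F} (hp : p ∈ R) : sdelta a b p ∈ R := by
  let K : IntermediateField F L := IntermediateField.adjoin F (Set.range w)
  let w' : Fin n → K := fun i => ⟨w i, IntermediateField.subset_adjoin F (Set.range w) ⟨i, rfl⟩⟩
  have hcoe : ∀ q : MvPolynomial (Fin n) F, ((aeval w' q : K) : L) = aeval w q := by
    intro q
    have h := MvPolynomial.comp_aeval_apply (K.val) q (f := w')
    exact h
  have h0 : aeval w' p = 0 := by
    have hz : ((aeval w' p : K) : L) = 0 := by rw [hcoe]; simpa using (hw p).2 hp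
    exact Subtype.coe_injective (by simpa using hz)
  have hchain := derivation_aeval_eq D w' p
  rw [h0, map_zero] at hchain
  have hL : (0 : L) = ∑ i, aeval w (pderiv i p) * (aeval w (a i) / aeval w (b i)) := by
    have h2 := congrArg (fun z : K => (z : L)) hchain
    push_cast at h2
    rw [h2]
    refine Finset.sum_congr rfl fun i _ => ?_
    congr 1
    · exact hcoe _
    · exact hD i
  rw [← hw, sdelta_apply, map_sum]
  have hsplit : ∀ i : Fin n, aeval w ((a i * ∏ j ∈ univ.erase i, b j) * pderiv i p)
      = (∏ j, aeval w (b j)) * (aeval w (pderiv i p) * (aeval w (a i) / aeval w (b i))) := by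
    intro i
    rw [map_mul, map_mul, map_prod,
      ← Finset.mul_prod_erase univ (fun j => aeval w (b j)) (Finset.mem_univ i)]
    field_simp [hb i]
  rw [Finset.sum_congr rfl fun i _ => hsplit i, ← Finset.mul_sum, ← hL, mul_zero]

end Nec

section Suff

variable {F : Type*} [Field F] {n : ℕ} {L : Type*} [Field L] [Algebra F L]

/-- The candidate value of the derivation at an element represented as `r(w)/s(w)`. -/
def Fval (w : Fin n → L) (a b : Fin n → MvPolynomial (Fin n) F)
    (r s : MvPolynomial (Fin n) F) : L :=
  (aeval w (sdelta a b r) * aeval w s - aeval w r * aeval w (sdelta a b s)) /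
    ((∏ j, aeval w (b j)) * (aeval w s) ^ 2)

variable (w : Fin n → L) (a b : Fin n → MvPolynomial (Fin n) F)

lemma Fval_wd (hb : ∀ i, aeval w (b i) ≠ 0) (R : Ideal (MvPolynomial (Fin n) F))
    (hw : ∀ r : MvPolynomial (Fin n) F, aeval w r = 0 ↔ r ∈ R)
    (hδ : ∀ p ∈ R, sdelta a b p ∈ R)
    {r₁ s₁ r₂ s₂ : MvPolynomial (Fin n) F}
    (h1 : aeval w s₁ ≠ 0) (h2 : aeval w s₂ ≠ 0)
    (hx : aeval w r₁ / aeval w s₁ = aeval w r₂ / aeval w s₂) :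
    Fval w a b r₁ s₁ = Fval w a b r₂ s₂ := by
  have hB : (∏ j, aeval w (b j)) ≠ (0 : L) := Finset.prod_ne_zero_iff.2 fun j _ => hb j
  have H : aeval w r₁ * aeval w s₂ = aeval w r₂ * aeval w s₁ := (div_eq_div_iff h1 h2).1 hx
  have hmem : r₁ * s₂ - r₂ * s₁ ∈ R := by
    rw [← hw, map_sub, map_mul, map_mul, H, sub_self]
  have hE0 : aeval w (sdelta a b (r₁ * s₂ - r₂ * s₁)) = 0 := (hw _).2 (hδ _ hmem)
  rw [map_sub, Derivation.leibniz, Derivation.leibniz] at hE0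
  simp only [smul_eq_mul, map_add, map_sub, map_mul] at hE0
  unfold Fval
  rw [div_eq_div_iff (mul_ne_zero hB (pow_ne_zero 2 h1)) (mul_ne_zero hB (pow_ne_zero 2 h2))]
  linear_combination ((∏ j, aeval w (b j)) * aeval w s₁ * aeval w s₂) * hE0 -
    ((∏ j, aeval w (b j)) * (aeval w (sdelta a b s₁) * aeval w s₂
      + aeval w (sdelta a b s₂) * aeval w s₁)) * H

lemma Fval_add (hb : ∀ i, aeval w (b i) ≠ 0) {r₁ s₁ r₂ s₂ : MvPolynomial (Fin n) F}
    (h1 : aeval w s₁ ≠ 0) (h2 : aeval w s₂ ≠ 0) :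
    Fval w a b (r₁ * s₂ + r₂ * s₁) (s₁ * s₂) = Fval w a b r₁ s₁ + Fval w a b r₂ s₂ := by
  have hB : (∏ j, aeval w (b j)) ≠ (0 : L) := Finset.prod_ne_zero_iff.2 fun j _ => hb j
  unfold Fval
  rw [Derivation.map_add, Derivation.leibniz, Derivation.leibniz, Derivation.leibniz]
  simp only [smul_eq_mul, map_add, map_mul]
  field_simp
  ring

lemma Fval_mul (hb : ∀ i, aeval w (b i) ≠ 0) {r₁ s₁ r₂ s₂ : MvPolynomial (Fin n) F}
    (h1 : aeval w s₁ ≠ 0) (h2 : aeval w s₂ ≠ 0) :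
    Fval w a b (r₁ * r₂) (s₁ * s₂)
      = (aeval w r₁ / aeval w s₁) * Fval w a b r₂ s₂
        + (aeval w r₂ / aeval w s₂) * Fval w a b r₁ s₁ := by
  have hB : (∏ j, aeval w (b j)) ≠ (0 : L) := Finset.prod_ne_zero_iff.2 fun j _ => hb j
  unfold Fval
  rw [Derivation.leibniz, Derivation.leibniz]
  simp only [smul_eq_mul, map_add, map_mul]
  rw [div_mul_div_comm, div_mul_div_comm,
    div_add_div _ _ (mul_ne_zero h1 (mul_ne_zero hB (pow_ne_zero 2 h2)))
      (mul_ne_zero h2 (mul_ne_zero hB (pow_ne_zero 2 h1))),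
    div_eq_div_iff (mul_ne_zero hB (pow_ne_zero 2 (mul_ne_zero h1 h2)))
      (mul_ne_zero (mul_ne_zero h1 (mul_ne_zero hB (pow_ne_zero 2 h2)))
        (mul_ne_zero h2 (mul_ne_zero hB (pow_ne_zero 2 h1))))]
  ring

lemma Fval_smul (hb : ∀ i, aeval w (b i) ≠ 0) (c : F) {r s : MvPolynomial (Fin n) F}
    (h1 : aeval w s ≠ 0) :
    Fval w a b (MvPolynomial.C c * r) s = algebraMap F L c * Fval w a b r s := by
  have hB : (∏ j, aeval w (b j)) ≠ (0 : L) := Finset.prod_ne_zero_iff.2 fun j _ => hb j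
  have hδc : sdelta a b (MvPolynomial.C c * r) = MvPolynomial.C c * sdelta a b r := by
    rw [MvPolynomial.C_mul', Derivation.map_smul, MvPolynomial.C_mul']
  unfold Fval
  rw [hδc, map_mul, map_mul, aeval_C]
  field_simp

lemma Fval_one : Fval w a b 1 1 = 0 := by
  unfold Fval
  rw [Derivation.map_one_eq_zero]
  simp

lemma Fval_X (hb : ∀ i, aeval w (b i) ≠ 0) (i : Fin n) :
    Fval w a b (X i) 1 = aeval w (a i) / aeval w (b i) := by
  have he : (∏ j ∈ univ.erase i, aeval w (b j)) ≠ (0 : L) :=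
    Finset.prod_ne_zero_iff.2 fun j _ => hb j
  unfold Fval
  rw [sdelta_X, Derivation.map_one_eq_zero]
  simp only [map_one, map_mul, map_zero, mul_one, mul_zero, sub_zero, one_pow, map_prod]
  rw [← Finset.mul_prod_erase univ (fun j => aeval w (b j)) (Finset.mem_univ i),
    mul_div_mul_right _ _ he]

end Suff

section Main

variable {F : Type*} [Field F] {n : ℕ} {L : Type*} [Field L] [Algebra F L]

lemma exists_derivation_of_delta_mem
    (w : Fin n → L) (a b : Fin n → MvPolynomial (Fin n) F)
    (R : Ideal (MvPolynomial (Fin n) F))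
    (hw : ∀ r : MvPolynomial (Fin n) F, aeval w r = 0 ↔ r ∈ R)
    (hb : ∀ i, aeval w (b i) ≠ 0)
    (hδ : ∀ p ∈ R, sdelta a b p ∈ R) :
    ∃ D : Derivation F (IntermediateField.adjoin F (Set.range w))
      (IntermediateField.adjoin F (Set.range w)),
      ∀ i, (D ⟨w i, IntermediateField.subset_adjoin F (Set.range w) ⟨i, rfl⟩⟩ : L)
        = aeval w (a i) / aeval w (b i) := by
  classical
  let K : IntermediateField F L := IntermediateField.adjoin F (Set.range w)
  let w' : Fin n → K := fun i => ⟨w i, IntermediateField.subset_adjoin F (Set.range w) ⟨i, rfl⟩⟩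
  have hcoe : ∀ q : MvPolynomial (Fin n) F, ((aeval w' q : K) : L) = aeval w q := by
    intro q
    have h := MvPolynomial.comp_aeval_apply (K.val) q (f := w')
    exact h
  have hmemK : ∀ r s : MvPolynomial (Fin n) F, Fval w a b r s ∈ K := by
    intro r s
    have hq : ∀ q : MvPolynomial (Fin n) F, aeval w q ∈ K := fun q => by
      rw [← hcoe q]; exact (aeval w' q).2
    unfold Fval
    exact K.div_mem (K.sub_mem (K.mul_mem (hq _) (hq _)) (K.mul_mem (hq _) (hq _)))
      (K.mul_mem (prod_mem fun j _ => hq _) (pow_mem (hq _) 2))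
  have hex : ∀ x : K, ∃ rs : MvPolynomial (Fin n) F × MvPolynomial (Fin n) F,
      aeval w rs.2 ≠ 0 ∧ (x : L) = aeval w rs.1 / aeval w rs.2 := by
    intro x
    obtain ⟨r, s, hx⟩ := (IntermediateField.mem_adjoin_range_iff F w (x : L)).1 x.2
    by_cases hs : aeval w s = 0
    · exact ⟨(0, 1), by simp, by simp [hx, hs]⟩
    · exact ⟨(r, s), hs, hx⟩
  choose rep hrep1 hrep2 using hex
  let Df : K → K := fun x => ⟨Fval w a b (rep x).1 (rep x).2, hmemK _ _⟩
  have hDf : ∀ (x : K) (r s : MvPolynomial (Fin n) F), aeval w s ≠ 0 →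
      (x : L) = aeval w r / aeval w s → ((Df x : K) : L) = Fval w a b r s := by
    intro x r s hs hx
    exact Fval_wd w a b hb R hw hδ (hrep1 x) hs (by rw [← hrep2 x, hx])
  have key_add : ∀ x y : K, Df (x + y) = Df x + Df y := by
    intro x y
    apply Subtype.coe_injective
    beta_reduce
    have hxy : ((x + y : K) : L)
        = aeval w ((rep x).1 * (rep y).2 + (rep y).1 * (rep x).2)
          / aeval w ((rep x).2 * (rep y).2) := by
      push_cast
      rw [hrep2 x, hrep2 y, map_add, map_mul, map_mul, map_mul,
        div_add_div _ _ (hrep1 x) (hrep1 y)]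
      ring
    have hco : ((Df x + Df y : K) : L) = ((Df x : K) : L) + ((Df y : K) : L) := by push_cast; ring
    rw [hco, hDf (x + y) _ _ (by rw [map_mul]; exact mul_ne_zero (hrep1 x) (hrep1 y)) hxy,
      hDf x _ _ (hrep1 x) (hrep2 x), hDf y _ _ (hrep1 y) (hrep2 y)]
    exact Fval_add w a b hb (hrep1 x) (hrep1 y)
  have key_smul : ∀ (c : F) (x : K), Df (c • x) = c • Df x := by
    intro c x
    apply Subtype.coe_injective
    beta_reduce
    have hsm : ∀ z : K, ((c • z : K) : L) = algebraMap F L c * (z : L) := by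
      intro z
      rw [Algebra.smul_def, IsScalarTower.algebraMap_apply F K L]
      push_cast
      rfl
    have hcx : ((c • x : K) : L)
        = aeval w (MvPolynomial.C c * (rep x).1) / aeval w (rep x).2 := by
      rw [hsm x, hrep2 x, map_mul, aeval_C, mul_div_assoc]
    rw [hsm (Df x), hDf (c • x) _ _ (hrep1 x) hcx, hDf x _ _ (hrep1 x) (hrep2 x)]
    exact Fval_smul w a b hb c (hrep1 x)
  have key_one : Df 1 = 0 := by
    apply Subtype.coe_injective
    beta_reduce
    have h1 : ((1 : K) : L) = aeval w (1 : MvPolynomial (Fin n) F)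
        / aeval w (1 : MvPolynomial (Fin n) F) := by simp
    rw [hDf 1 1 1 (by simp) h1]
    simpa using Fval_one w a b
  have key_leibniz : ∀ x y : K, Df (x * y) = x • Df y + y • Df x := by
    intro x y
    apply Subtype.coe_injective
    beta_reduce
    have hxy : ((x * y : K) : L)
        = aeval w ((rep x).1 * (rep y).1) / aeval w ((rep x).2 * (rep y).2) := by
      push_cast
      rw [hrep2 x, hrep2 y, map_mul, map_mul, div_mul_div_comm]
    have hco : ((x • Df y + y • Df x : K) : L)
        = (x : L) * ((Df y : K) : L) + (y : L) * ((Df x : K) : L) := by push_cast; rfl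
    rw [hco, hDf (x * y) _ _ (by rw [map_mul]; exact mul_ne_zero (hrep1 x) (hrep1 y)) hxy,
      hDf x _ _ (hrep1 x) (hrep2 x), hDf y _ _ (hrep1 y) (hrep2 y), hrep2 x, hrep2 y]
    exact Fval_mul w a b hb (hrep1 x) (hrep1 y)
  refine ⟨{ toFun := Df
            map_add' := key_add
            map_smul' := fun c x => by simpa using key_smul c x
            map_one_eq_zero' := key_one
            leibniz' := key_leibniz }, ?_⟩
  intro i
  have hwi : ((w' i : K) : L)
      = aeval w (X i : MvPolynomial (Fin n) F) / aeval w (1 : MvPolynomial (Fin n) F) := by simp; rfl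
  exact (hDf (w' i) (X i) 1 (by simp) hwi).trans (Fval_X w a b hb i)

end Main

end Aux3
end Aux2
end Aux

/-- Let `P, Q` be prime ideals of `C[X₁, …, Xₙ]` and `R` a minimal
prime over `P + Q`.  Let `v, u, w` be generic points (in field extensions of `C`) of
`P, Q, R` respectively, and let `fᵢ = aᵢ/bᵢ` be rational functions whose denominators
lie outside `P`, `Q` and `R`.  If there are derivations over `C` of `C(v)` and of
`C(u)` sending `vᵢ ↦ fᵢ(v)` and `uᵢ ↦ fᵢ(u)` respectively, then there is a derivation
over `C` of `C(w)` sending `wᵢ ↦ fᵢ(w)`. -/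
theorem derivation_on_component_of_intersection
    {C : Type*} [Field C] [CharZero C] {n : ℕ}
    (P Q R : Ideal (MvPolynomial (Fin n) C))
    (hP : P.IsPrime) (hQ : Q.IsPrime)
    (hR : R ∈ (P ⊔ Q).minimalPrimes)
    {L₁ L₂ L₃ : Type*} [Field L₁] [Field L₂] [Field L₃]
    [Algebra C L₁] [Algebra C L₂] [Algebra C L₃]
    (v : Fin n → L₁) (u : Fin n → L₂) (w : Fin n → L₃)
    (hv : ∀ r : MvPolynomial (Fin n) C, aeval v r = 0 ↔ r ∈ P)
    (hu : ∀ r : MvPolynomial (Fin n) C, aeval u r = 0 ↔ r ∈ Q)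
    (hw : ∀ r : MvPolynomial (Fin n) C, aeval w r = 0 ↔ r ∈ R)
    (a b : Fin n → MvPolynomial (Fin n) C)
    (hbP : ∀ i, b i ∉ P) (hbQ : ∀ i, b i ∉ Q) (hbR : ∀ i, b i ∉ R)
    (D₁ : Derivation C (IntermediateField.adjoin C (Set.range v))
      (IntermediateField.adjoin C (Set.range v)))
    (hD₁ : ∀ i, (D₁ ⟨v i, IntermediateField.subset_adjoin C (Set.range v) ⟨i, rfl⟩⟩ : L₁) =
      aeval v (a i) / aeval v (b i))
    (D₂ : Derivation C (IntermediateField.adjoin C (Set.range u))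
      (IntermediateField.adjoin C (Set.range u)))
    (hD₂ : ∀ i, (D₂ ⟨u i, IntermediateField.subset_adjoin C (Set.range u) ⟨i, rfl⟩⟩ : L₂) =
      aeval u (a i) / aeval u (b i)) :
    ∃ D : Derivation C (IntermediateField.adjoin C (Set.range w))
      (IntermediateField.adjoin C (Set.range w)),
      ∀ i, (D ⟨w i, IntermediateField.subset_adjoin C (Set.range w) ⟨i, rfl⟩⟩ : L₃) =
        aeval w (a i) / aeval w (b i) := by
  have hbv : ∀ i, aeval v (b i) ≠ 0 := fun i h => hbP i ((hv _).1 h)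
  have hbu : ∀ i, aeval u (b i) ≠ 0 := fun i h => hbQ i ((hu _).1 h)
  have hbw : ∀ i, aeval w (b i) ≠ 0 := fun i h => hbR i ((hw _).1 h)
  have hδP : ∀ p ∈ P, sdelta a b p ∈ P := fun p hp =>
    delta_mem_of_derivation P v hv a b hbv D₁ hD₁ hp
  have hδQ : ∀ p ∈ Q, sdelta a b p ∈ Q := fun p hp =>
    delta_mem_of_derivation Q u hu a b hbu D₂ hD₂ hp
  have hδI : ∀ y ∈ P ⊔ Q, sdelta a b y ∈ P ⊔ Q := by
    intro y hy
    obtain ⟨p, hp, q, hq, rfl⟩ := Submodule.mem_sup.1 hy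
    rw [map_add]
    exact Submodule.add_mem _ (Ideal.mem_sup_left (hδP p hp)) (Ideal.mem_sup_right (hδQ q hq))
  have hRp : R.IsPrime := hR.1.1
  have hIR : P ⊔ Q ≤ R := hR.1.2
  have hδR : ∀ p ∈ R, sdelta a b p ∈ R := by
    intro p hp
    obtain ⟨s, hs, m, hsm⟩ := exists_mul_pow_mem hRp hR hp
    exact descend_aux hRp hIR (sdelta a b) hδI p m s hs 0 (by simpa using hsm)
  exact exists_derivation_of_delta_mem w a b R hw hbw hδR
end
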